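/- There is an absolute constant C such that the following holds. Let d ≥ 1 and let S be a finite set of n non-vertical line segments in the plane, all of positive width, such that the widths of the segments of S pairwise differ by at most a factor d (i.e., the maximum width is at most d times the minimum width). Then the complexity of the upper envelope of S is at most C·d·n; in other words, the upper envelope of S has complexity O(dn). -/

import Mathlib

/-!
STATEMENT 0: There is an absolute constant C such that for every d ≥ 1 and every
finite set S of n non-vertical segments in the plane, all of positive width, whose
widths pairwise differ by at most a factor d, the upper envelope of S has
complexity at most C·d·n.
-/

/-- A non-vertical line segment in the plane of positive width, given by its two
endpoints, with the left endpoint having strictly smaller x-coordinate. -/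
structure Seg where
  a : ℝ × ℝ
  b : ℝ × ℝ
  lt : a.1 < b.1

namespace Seg

/-- The x-projection (domain) of a segment. -/
def dom (s : Seg) : Set ℝ := Set.Icc s.a.1 s.b.1

/-- The y-coordinate of the point of the segment on the vertical line through `x`
(linear interpolation between the endpoints). -/
noncomputable def val (s : Seg) (x : ℝ) : ℝ :=
  s.a.2 + (x - s.a.1) * (s.b.2 - s.a.2) / (s.b.1 - s.a.1)

/-- The width of a segment: the length of its projection onto the x-axis. -/
def width (s : Seg) : ℝ := s.b.1 - s.a.1

end Seg

/-- The upper envelope of a finite set of segments: at each `x`, the maximum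
y-coordinate of a point of a segment of `S` on the vertical line through `x`. -/
noncomputable def upperEnv (S : Finset Seg) (x : ℝ) : ℝ :=
  sSup {y | ∃ s ∈ S, x ∈ s.dom ∧ s.val x = y}

/-- `I` is a piece of the upper envelope of `S`: a nonempty subinterval of x-values
on which the envelope coincides with a single segment of `S`. -/
def EnvPiece (S : Finset Seg) (I : Set ℝ) : Prop :=
  I.Nonempty ∧ I.OrdConnected ∧
    ∃ s ∈ S, ∀ x ∈ I, x ∈ s.dom ∧ upperEnv S x = s.val x

/-- `I` is a maximal piece of the upper envelope of `S`. -/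
def MaxEnvPiece (S : Finset Seg) (I : Set ℝ) : Prop :=
  EnvPiece S I ∧ ∀ J : Set ℝ, EnvPiece S J → I ⊆ J → J = I

namespace UEP

open Set

noncomputable def slope (s : Seg) : ℝ := (s.b.2 - s.a.2) / (s.b.1 - s.a.1)

lemma val_affine (s : Seg) (x y : ℝ) : s.val x = s.val y + slope s * (x - y) := by
  unfold Seg.val slope; ring

lemma width_pos (s : Seg) : 0 < s.width := sub_pos.mpr s.lt

lemma dom_mem {s : Seg} {x : ℝ} : x ∈ s.dom ↔ s.a.1 ≤ x ∧ x ≤ s.b.1 := Set.mem_Icc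

def envSet (S : Finset Seg) (x : ℝ) : Set ℝ := {y | ∃ s ∈ S, x ∈ s.dom ∧ s.val x = y}

lemma upperEnv_def (S : Finset Seg) (x : ℝ) : upperEnv S x = sSup (envSet S x) := rfl

lemma envSet_finite (S : Finset Seg) (x : ℝ) : (envSet S x).Finite := by
  have h : envSet S x ⊆ (fun s : Seg => s.val x) '' (S : Set Seg) := by
    rintro y ⟨s, hs, _, rfl⟩; exact ⟨s, hs, rfl⟩
  exact (S.finite_toSet.image _).subset h

lemma le_upperEnv {S : Finset Seg} {s : Seg} {x : ℝ} (hs : s ∈ S) (hx : x ∈ s.dom) :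
    s.val x ≤ upperEnv S x :=
  le_csSup (envSet_finite S x).bddAbove ⟨s, hs, hx, rfl⟩

lemma upperEnv_attained {S : Finset Seg} {x : ℝ} (h : ∃ s ∈ S, x ∈ s.dom) :
    ∃ t ∈ S, x ∈ t.dom ∧ t.val x = upperEnv S x := by
  obtain ⟨s, hs, hx⟩ := h
  have hne : (envSet S x).Nonempty := ⟨s.val x, s, hs, hx, rfl⟩
  obtain ⟨t, ht, hd, hv⟩ := hne.csSup_mem (envSet_finite S x)
  exact ⟨t, ht, hd, hv⟩

lemma val_lt_near {t s : Seg} {p : ℝ} (h : t.val p < s.val p) :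
    ∃ γ, 0 < γ ∧ ∀ x, |x - p| < γ → t.val x < s.val x := by
  set D := s.val p - t.val p with hD
  have hD0 : 0 < D := sub_pos.mpr h
  set Δ := slope t - slope s with hΔ
  refine ⟨D / (|Δ| + 1), by positivity, fun x hx => ?_⟩
  have e1 : t.val x - s.val x = -D + Δ * (x - p) := by
    have a1 := val_affine t x p
    have a2 := val_affine s x p
    rw [a1, a2, hD, hΔ]; ring
  have habs : Δ * (x - p) ≤ |Δ| * |x - p| := by
    calc Δ * (x - p) ≤ |Δ * (x - p)| := le_abs_self _
      _ = |Δ| * |x - p| := abs_mul _ _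
  have h2 : |Δ| * |x - p| ≤ |Δ| * (D / (|Δ| + 1)) :=
    mul_le_mul_of_nonneg_left hx.le (abs_nonneg Δ)
  have h3 : |Δ| * (D / (|Δ| + 1)) < D := by
    have hpos : (0:ℝ) < |Δ| + 1 := by positivity
    rw [mul_div_assoc']
    rw [div_lt_iff₀ hpos]
    nlinarith [abs_nonneg Δ]
  have : t.val x - s.val x < 0 := by linarith
  linarith

def IsWitness (S : Finset Seg) (s : Seg) (I : Set ℝ) : Prop :=
  s ∈ S ∧ ∀ x ∈ I, x ∈ s.dom ∧ upperEnv S x = s.val x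

lemma piece_nonempty {S : Finset Seg} {I : Set ℝ} (h : MaxEnvPiece S I) : I.Nonempty := h.1.1

lemma piece_ord {S : Finset Seg} {I : Set ℝ} (h : MaxEnvPiece S I) : I.OrdConnected := h.1.2.1

lemma piece_witness {S : Finset Seg} {I : Set ℝ} (h : MaxEnvPiece S I) :
    ∃ s, IsWitness S s I := by
  obtain ⟨s, hs, hw⟩ := h.1.2.2
  exact ⟨s, hs, hw⟩

lemma bddBelow_w {S : Finset Seg} {s : Seg} {I : Set ℝ} (hw : IsWitness S s I) : BddBelow I :=
  ⟨s.a.1, fun x hx => (dom_mem.mp (hw.2 x hx).1).1⟩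

lemma bddAbove_w {S : Finset Seg} {s : Seg} {I : Set ℝ} (hw : IsWitness S s I) : BddAbove I :=
  ⟨s.b.1, fun x hx => (dom_mem.mp (hw.2 x hx).1).2⟩

lemma winf_ge {S : Finset Seg} {s : Seg} {I : Set ℝ} (hw : IsWitness S s I) (hne : I.Nonempty) :
    s.a.1 ≤ sInf I :=
  le_csInf hne fun x hx => (dom_mem.mp (hw.2 x hx).1).1

lemma wsup_le {S : Finset Seg} {s : Seg} {I : Set ℝ} (hw : IsWitness S s I) (hne : I.Nonempty) :
    sSup I ≤ s.b.1 :=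
  csSup_le hne fun x hx => (dom_mem.mp (hw.2 x hx).1).2

lemma winf_le_wsup {S : Finset Seg} {s : Seg} {I : Set ℝ} (hw : IsWitness S s I)
    (hne : I.Nonempty) : sInf I ≤ sSup I :=
  csInf_le_csSup hne (bddBelow_w hw) (bddAbove_w hw)

section Uniqueness

variable {S : Finset Seg} {I₁ I₂ : Set ℝ}

lemma subset_of_inf_eq (h₁ : MaxEnvPiece S I₁) (h₂ : MaxEnvPiece S I₂)
    (hinf : sInf I₁ = sInf I₂)
    (hbi : sInf I₁ ∈ I₁ ↔ sInf I₂ ∈ I₂) (hbs : sSup I₁ ∈ I₁ ↔ sSup I₂ ∈ I₂)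
    (hss : sSup I₁ ≤ sSup I₂) : I₁ ⊆ I₂ := by
  obtain ⟨s₁, hw₁⟩ := piece_witness h₁
  obtain ⟨s₂, hw₂⟩ := piece_witness h₂
  have hne₂ := piece_nonempty h₂
  intro x hx
  have hux : sInf I₁ ≤ x := csInf_le (bddBelow_w hw₁) hx
  rcases eq_or_lt_of_le hux with he | hlt
  · have h3 : sInf I₁ ∈ I₁ := by rw [he]; exact hx
    have h4 := hbi.mp h3
    rw [← he, hinf] at *
    exact h4
  · obtain ⟨p, hp, hpx⟩ := (csInf_lt_iff (bddBelow_w hw₂) hne₂).mp (hinf ▸ hlt)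
    have hxS : x ≤ sSup I₂ := (le_csSup (bddAbove_w hw₁) hx).trans hss
    rcases lt_or_eq_of_le hxS with hlt2 | he2
    · obtain ⟨q, hq, hxq⟩ := exists_lt_of_lt_csSup hne₂ hlt2
      exact (piece_ord h₂).out hp hq ⟨hpx.le, hxq.le⟩
    · have hs1 : sSup I₁ = x := le_antisymm (he2 ▸ hss) (le_csSup (bddAbove_w hw₁) hx)
      have h3 : sSup I₁ ∈ I₁ := by rw [hs1]; exact hx
      have h4 := hbs.mp h3
      rw [he2]; exact h4

lemma eq_of_inf_eq (h₁ : MaxEnvPiece S I₁) (h₂ : MaxEnvPiece S I₂)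
    (hinf : sInf I₁ = sInf I₂)
    (hbi : sInf I₁ ∈ I₁ ↔ sInf I₂ ∈ I₂) (hbs : sSup I₁ ∈ I₁ ↔ sSup I₂ ∈ I₂) : I₁ = I₂ := by
  rcases le_total (sSup I₁) (sSup I₂) with h | h
  · exact (h₁.2 I₂ h₂.1 (subset_of_inf_eq h₁ h₂ hinf hbi hbs h)).symm
  · exact h₂.2 I₁ h₁.1 (subset_of_inf_eq h₂ h₁ hinf.symm hbi.symm hbs.symm h)

lemma subset_of_sup_eq (h₁ : MaxEnvPiece S I₁) (h₂ : MaxEnvPiece S I₂)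
    (hsup : sSup I₁ = sSup I₂)
    (hbi : sInf I₁ ∈ I₁ ↔ sInf I₂ ∈ I₂) (hbs : sSup I₁ ∈ I₁ ↔ sSup I₂ ∈ I₂)
    (hii : sInf I₂ ≤ sInf I₁) : I₁ ⊆ I₂ := by
  obtain ⟨s₁, hw₁⟩ := piece_witness h₁
  obtain ⟨s₂, hw₂⟩ := piece_witness h₂
  have hne₂ := piece_nonempty h₂
  intro x hx
  have hxv : x ≤ sSup I₁ := le_csSup (bddAbove_w hw₁) hx
  rcases eq_or_lt_of_le hxv with he | hlt
  · have h3 : sSup I₁ ∈ I₁ := by rw [← he]; exact hx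
    have h4 := hbs.mp h3
    rw [he, hsup]; exact h4
  · obtain ⟨q, hq, hxq⟩ := exists_lt_of_lt_csSup hne₂ (hsup ▸ hlt)
    have hix : sInf I₂ ≤ x := hii.trans (csInf_le (bddBelow_w hw₁) hx)
    rcases eq_or_lt_of_le hix with he2 | hlt2
    · have h3 : sInf I₁ = x := le_antisymm (csInf_le (bddBelow_w hw₁) hx) (he2 ▸ hii)
      have h5 : sInf I₁ ∈ I₁ := by rw [h3]; exact hx
      have h4 := hbi.mp h5
      rw [← he2]; exact h4
    · obtain ⟨p, hp, hpx⟩ := (csInf_lt_iff (bddBelow_w hw₂) hne₂).mp hlt2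
      exact (piece_ord h₂).out hp hq ⟨hpx.le, hxq.le⟩

lemma eq_of_sup_eq (h₁ : MaxEnvPiece S I₁) (h₂ : MaxEnvPiece S I₂)
    (hsup : sSup I₁ = sSup I₂)
    (hbi : sInf I₁ ∈ I₁ ↔ sInf I₂ ∈ I₂) (hbs : sSup I₁ ∈ I₁ ↔ sSup I₂ ∈ I₂) : I₁ = I₂ := by
  rcases le_total (sInf I₂) (sInf I₁) with h | h
  · exact (h₁.2 I₂ h₂.1 (subset_of_sup_eq h₁ h₂ hsup hbi hbs h)).symm
  · exact h₂.2 I₁ h₁.1 (subset_of_sup_eq h₂ h₁ hsup.symm hbi.symm hbs.symm h)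

end Uniqueness

section Extension

variable {S : Finset Seg} {s : Seg} {I : Set ℝ}

lemma not_flat_left (h : MaxEnvPiece S I) (hw : IsWitness S s I)
    (ha : s.a.1 < sInf I)
    (henv : upperEnv S (sInf I) = s.val (sInf I))
    {ε : ℝ} (hε : 0 < ε)
    (hflat : ∀ x, sInf I - ε < x → x < sInf I → upperEnv S x = s.val x) : False := by
  have hne := piece_nonempty h
  set u := sInf I with hu
  set ε' := min ε (u - s.a.1) with he'
  have hε' : 0 < ε' := lt_min hε (by linarith)
  have hε'1 : ε' ≤ ε := min_le_left _ _
  have hε'2 : ε' ≤ u - s.a.1 := min_le_right _ _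
  have hub : u ≤ s.b.1 := (winf_le_wsup hw hne).trans (wsup_le hw hne)
  set J := I ∪ Set.Ioc (u - ε') u with hJ
  have hpiece : EnvPiece S J := by
    refine ⟨⟨hne.choose, Or.inl hne.choose_spec⟩, ?_, s, hw.1, ?_⟩
    · refine ⟨fun x hx y hy => fun z hz => ?_⟩
      rcases hx with hx | hx <;> rcases hy with hy | hy
      · exact Or.inl ((piece_ord h).out hx hy hz)
      · -- x ∈ I, y ∈ Ioc : y ≤ u ≤ x
        have h1 : u ≤ x := csInf_le (bddBelow_w hw) hx
        have h2 : z = x := le_antisymm (hz.2.trans (hy.2.trans h1)) hz.1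
        rw [h2]; exact Or.inl hx
      · -- x ∈ Ioc, y ∈ I
        rcases le_or_gt z u with hzu | huz
        · exact Or.inr ⟨lt_of_lt_of_le hx.1 hz.1, hzu⟩
        · obtain ⟨w, hwI, hwz⟩ := (csInf_lt_iff (bddBelow_w hw) hne).mp huz
          exact Or.inl ((piece_ord h).out hwI hy ⟨hwz.le, hz.2⟩)
      · exact Or.inr ⟨lt_of_lt_of_le hx.1 hz.1, hz.2.trans hy.2⟩
    · rintro x (hx | hx)
      · exact hw.2 x hx
      · have hdom : x ∈ s.dom := dom_mem.mpr ⟨by linarith [hx.1], hx.2.trans hub⟩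
        refine ⟨hdom, ?_⟩
        rcases eq_or_lt_of_le hx.2 with he | hlt
        · rw [he]; exact henv
        · exact hflat x (by linarith [hx.1]) hlt
  have heq := h.2 J hpiece Set.subset_union_left
  have hmem : u - ε' / 2 ∈ J := Or.inr ⟨by linarith, by linarith⟩
  rw [heq] at hmem
  have := csInf_le (bddBelow_w hw) hmem
  rw [← hu] at this
  linarith

lemma not_flat_right (h : MaxEnvPiece S I) (hw : IsWitness S s I)
    (hb : sSup I < s.b.1)
    (henv : upperEnv S (sSup I) = s.val (sSup I))
    {ε : ℝ} (hε : 0 < ε)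
    (hflat : ∀ x, sSup I < x → x < sSup I + ε → upperEnv S x = s.val x) : False := by
  have hne := piece_nonempty h
  set v := sSup I with hv
  set ε' := min ε (s.b.1 - v) with he'
  have hε' : 0 < ε' := lt_min hε (by linarith)
  have hε'1 : ε' ≤ ε := min_le_left _ _
  have hε'2 : ε' ≤ s.b.1 - v := min_le_right _ _
  have hav : s.a.1 ≤ v := (winf_ge hw hne).trans (winf_le_wsup hw hne)
  set J := I ∪ Set.Ico v (v + ε') with hJ
  have hpiece : EnvPiece S J := by
    refine ⟨⟨hne.choose, Or.inl hne.choose_spec⟩, ?_, s, hw.1, ?_⟩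
    · refine ⟨fun x hx y hy => fun z hz => ?_⟩
      rcases hx with hx | hx <;> rcases hy with hy | hy
      · exact Or.inl ((piece_ord h).out hx hy hz)
      · -- x ∈ I, y ∈ Ico
        rcases lt_or_ge z v with hzv | hvz
        · obtain ⟨w, hwI, hwz⟩ := exists_lt_of_lt_csSup hne hzv
          exact Or.inl ((piece_ord h).out hx hwI ⟨hz.1, hwz.le⟩)
        · exact Or.inr ⟨hvz, lt_of_le_of_lt hz.2 hy.2⟩
      · -- x ∈ Ico, y ∈ I : y ≤ v ≤ x
        have h1 : y ≤ v := le_csSup (bddAbove_w hw) hy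
        have h2 : z = x := le_antisymm (hz.2.trans (h1.trans hx.1)) hz.1
        rw [h2]; exact Or.inr hx
      · exact Or.inr ⟨hx.1.trans hz.1, lt_of_le_of_lt hz.2 hy.2⟩
    · rintro x (hx | hx)
      · exact hw.2 x hx
      · have hdom : x ∈ s.dom := dom_mem.mpr ⟨hav.trans hx.1, by linarith [hx.2]⟩
        refine ⟨hdom, ?_⟩
        rcases eq_or_lt_of_le hx.1 with he | hlt
        · rw [← he]; exact henv
        · exact hflat x hlt (by linarith [hx.2])
  have heq := h.2 J hpiece Set.subset_union_left
  have hmem : v + ε' / 2 ∈ J := Or.inr ⟨by linarith, by linarith⟩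
  rw [heq] at hmem
  have := le_csSup (bddAbove_w hw) hmem
  rw [← hv] at this
  linarith

lemma exists_kill_left (h : MaxEnvPiece S I) (hw : IsWitness S s I)
    (hne1 : upperEnv S (sInf I) ≠ s.val (sInf I)) : ∃ t ∈ S, t.b.1 = sInf I := by
  have hne := piece_nonempty h
  set u := sInf I with hu
  have hau : s.a.1 ≤ u := winf_ge hw hne
  have hub : u ≤ s.b.1 := (winf_le_wsup hw hne).trans (wsup_le hw hne)
  have hudom : u ∈ s.dom := dom_mem.mpr ⟨hau, hub⟩
  have hlt : s.val u < upperEnv S u :=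
    lt_of_le_of_ne (le_upperEnv hw.1 hudom) (Ne.symm hne1)
  obtain ⟨t, htS, htd, htv⟩ := upperEnv_attained ⟨s, hw.1, hudom⟩
  have hts : s.val u < t.val u := by rw [htv]; exact hlt
  have huI : u ∉ I := fun huu => hne1 ((hw.2 u huu).2)
  refine ⟨t, htS, ?_⟩
  by_contra hbt
  have hub' : u < t.b.1 := lt_of_le_of_ne (dom_mem.mp htd).2 (Ne.symm hbt)
  obtain ⟨γ, hγ, hnear⟩ := val_lt_near hts
  set δ := min γ (t.b.1 - u) with hδdef
  have hδ : 0 < δ := lt_min hγ (by linarith)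
  obtain ⟨x, hxI, hxlt⟩ := (csInf_lt_iff (bddBelow_w hw) hne).mp
    (show sInf I < sInf I + δ by linarith)
  rw [← hu] at hxlt
  have hux : u ≤ x := csInf_le (bddBelow_w hw) hxI
  have hxu : u < x := lt_of_le_of_ne hux (fun he => huI (he ▸ hxI))
  have hxd : x ∈ t.dom := dom_mem.mpr
    ⟨(dom_mem.mp htd).1.trans hux, by linarith [min_le_right γ (t.b.1 - u)]⟩
  have hst : s.val x < t.val x := by
    apply hnear
    rw [abs_of_nonneg (by linarith)]
    linarith [min_le_left γ (t.b.1 - u)]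
  have h1 : t.val x ≤ upperEnv S x := le_upperEnv htS hxd
  have h2 : upperEnv S x = s.val x := (hw.2 x hxI).2
  linarith

lemma exists_kill_right (h : MaxEnvPiece S I) (hw : IsWitness S s I)
    (hne1 : upperEnv S (sSup I) ≠ s.val (sSup I)) : ∃ t ∈ S, t.a.1 = sSup I := by
  have hne := piece_nonempty h
  set v := sSup I with hv
  have hav : s.a.1 ≤ v := (winf_ge hw hne).trans (winf_le_wsup hw hne)
  have hvb : v ≤ s.b.1 := wsup_le hw hne
  have hvdom : v ∈ s.dom := dom_mem.mpr ⟨hav, hvb⟩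
  have hlt : s.val v < upperEnv S v :=
    lt_of_le_of_ne (le_upperEnv hw.1 hvdom) (Ne.symm hne1)
  obtain ⟨t, htS, htd, htv⟩ := upperEnv_attained ⟨s, hw.1, hvdom⟩
  have hts : s.val v < t.val v := by rw [htv]; exact hlt
  have hvI : v ∉ I := fun hvv => hne1 ((hw.2 v hvv).2)
  refine ⟨t, htS, ?_⟩
  by_contra hta
  have hta' : t.a.1 < v := lt_of_le_of_ne (dom_mem.mp htd).1 hta
  obtain ⟨γ, hγ, hnear⟩ := val_lt_near hts
  set δ := min γ (v - t.a.1) with hδdef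
  have hδ : 0 < δ := lt_min hγ (by linarith)
  obtain ⟨x, hxI, hxgt⟩ := exists_lt_of_lt_csSup hne (show sSup I - δ < sSup I by linarith)
  rw [← hv] at hxgt
  have hxv : x ≤ v := le_csSup (bddAbove_w hw) hxI
  have hxv' : x < v := lt_of_le_of_ne hxv (fun he => hvI (he ▸ hxI))
  have hxd : x ∈ t.dom := dom_mem.mpr
    ⟨by linarith [min_le_right γ (v - t.a.1)], hxv.trans (dom_mem.mp htd).2⟩
  have hst : s.val x < t.val x := by
    apply hnear
    rw [abs_of_nonpos (by linarith)]
    linarith [min_le_left γ (v - t.a.1)]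
  have h1 : t.val x ≤ upperEnv S x := le_upperEnv htS hxd
  have h2 : upperEnv S x = s.val x := (hw.2 x hxI).2
  linarith

end Extension

section Rlemmas

variable {S : Finset Seg} {s : Seg}

lemma exists_left_r (hsS : s ∈ S) {u : ℝ} (hau : s.a.1 < u) (hub : u ≤ s.b.1)
    (henv : upperEnv S u = s.val u)
    (hQ : ∀ γ, 0 < γ → ∃ x, u - γ < x ∧ x < u ∧ upperEnv S x ≠ s.val x) :
    ∃ r ∈ S, u ∈ r.dom ∧ r.val u = upperEnv S u ∧ ∀ x, u < x → r.val x < s.val x := by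
  classical
  set Q : Seg → ℝ → Prop := fun t γ =>
    ∃ x, u - γ < x ∧ x < u ∧ x ∈ t.dom ∧ upperEnv S x = t.val x ∧ s.val x < t.val x with hQdef
  have key : ∀ γ, 0 < γ → ∃ t ∈ S, Q t γ := by
    intro γ hγ
    obtain ⟨x, hx1, hx2, hx3⟩ := hQ (min γ (u - s.a.1)) (lt_min hγ (by linarith))
    have hxd : x ∈ s.dom := dom_mem.mpr
      ⟨by linarith [min_le_right γ (u - s.a.1)], by linarith⟩
    have hxe : s.val x < upperEnv S x := lt_of_le_of_ne (le_upperEnv hsS hxd) (Ne.symm hx3)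
    obtain ⟨t, htS, htd, htv⟩ := upperEnv_attained ⟨s, hsS, hxd⟩
    exact ⟨t, htS, x, by linarith [min_le_left γ (u - s.a.1)], hx2, htd, htv.symm,
      by rw [htv]; exact hxe⟩
  have main : ∃ t ∈ S, ∀ γ, 0 < γ → Q t γ := by
    by_contra hcon
    push_neg at hcon
    have h' : ∀ t : Seg, ∃ γ, 0 < γ ∧ (t ∈ S → ¬ Q t γ) := by
      intro t
      by_cases ht : t ∈ S
      · obtain ⟨γ, hγ, hq⟩ := hcon t ht
        exact ⟨γ, hγ, fun _ => hq⟩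
      · exact ⟨1, one_pos, fun hh => absurd hh ht⟩
    choose γf hγf using h'
    obtain ⟨tm, htm, hminm⟩ := S.exists_min_image γf ⟨s, hsS⟩
    obtain ⟨t, htS, x, hx1, hx2, hx3, hx4, hx5⟩ := key (γf tm) (hγf tm).1
    exact (hγf t).2 htS ⟨x, by linarith [hminm t htS], hx2, hx3, hx4, hx5⟩
  obtain ⟨t, htS, ht⟩ := main
  have htb : u ≤ t.b.1 := by
    by_contra hb
    push_neg at hb
    obtain ⟨x, h1, h2, hd, _, _⟩ := ht (u - t.b.1) (by linarith)
    exact absurd (dom_mem.mp hd).2 (by linarith)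
  have hta : t.a.1 ≤ u := by
    obtain ⟨x, _, h2, hd, _, _⟩ := ht 1 one_pos
    linarith [(dom_mem.mp hd).1]
  have hud : u ∈ t.dom := dom_mem.mpr ⟨hta, htb⟩
  have hle : t.val u ≤ s.val u := by
    rw [← henv]; exact le_upperEnv htS hud
  have hge : s.val u ≤ t.val u := by
    by_contra hgt
    push_neg at hgt
    obtain ⟨γ, hγ, hnear⟩ := val_lt_near hgt
    obtain ⟨x, h1, h2, _, _, h5⟩ := ht γ hγ
    have := hnear x (by rw [abs_of_nonpos (by linarith)]; linarith)
    linarith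
  have hequ : t.val u = s.val u := le_antisymm hle hge
  have hsub : ∀ x : ℝ, t.val x - s.val x = (slope t - slope s) * (x - u) := by
    intro x
    have a1 := val_affine t x u
    have a2 := val_affine s x u
    rw [a1, a2, hequ]; ring
  have hΔ : slope t - slope s < 0 := by
    obtain ⟨x, h1, h2, _, _, h5⟩ := ht 1 one_pos
    have e1 := hsub x
    nlinarith
  refine ⟨t, htS, hud, by rw [hequ]; exact henv.symm, fun x hx => ?_⟩
  have e1 := hsub x
  nlinarith

lemma exists_right_r (hsS : s ∈ S) {v : ℝ} (hav : s.a.1 ≤ v) (hvb : v < s.b.1)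
    (henv : upperEnv S v = s.val v)
    (hQ : ∀ γ, 0 < γ → ∃ x, v < x ∧ x < v + γ ∧ upperEnv S x ≠ s.val x) :
    ∃ r ∈ S, v ∈ r.dom ∧ r.val v = upperEnv S v ∧ ∀ x, x < v → r.val x < s.val x := by
  classical
  set Q : Seg → ℝ → Prop := fun t γ =>
    ∃ x, v < x ∧ x < v + γ ∧ x ∈ t.dom ∧ upperEnv S x = t.val x ∧ s.val x < t.val x with hQdef
  have key : ∀ γ, 0 < γ → ∃ t ∈ S, Q t γ := by
    intro γ hγ
    obtain ⟨x, hx1, hx2, hx3⟩ := hQ (min γ (s.b.1 - v)) (lt_min hγ (by linarith))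
    have hxd : x ∈ s.dom := dom_mem.mpr
      ⟨by linarith, by linarith [min_le_right γ (s.b.1 - v)]⟩
    have hxe : s.val x < upperEnv S x := lt_of_le_of_ne (le_upperEnv hsS hxd) (Ne.symm hx3)
    obtain ⟨t, htS, htd, htv⟩ := upperEnv_attained ⟨s, hsS, hxd⟩
    exact ⟨t, htS, x, hx1, by linarith [min_le_left γ (s.b.1 - v)], htd, htv.symm,
      by rw [htv]; exact hxe⟩
  have main : ∃ t ∈ S, ∀ γ, 0 < γ → Q t γ := by
    by_contra hcon
    push_neg at hcon
    have h' : ∀ t : Seg, ∃ γ, 0 < γ ∧ (t ∈ S → ¬ Q t γ) := by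
      intro t
      by_cases ht : t ∈ S
      · obtain ⟨γ, hγ, hq⟩ := hcon t ht
        exact ⟨γ, hγ, fun _ => hq⟩
      · exact ⟨1, one_pos, fun hh => absurd hh ht⟩
    choose γf hγf using h'
    obtain ⟨tm, htm, hminm⟩ := S.exists_min_image γf ⟨s, hsS⟩
    obtain ⟨t, htS, x, hx1, hx2, hx3, hx4, hx5⟩ := key (γf tm) (hγf tm).1
    exact (hγf t).2 htS ⟨x, hx1, by linarith [hminm t htS], hx3, hx4, hx5⟩
  obtain ⟨t, htS, ht⟩ := main
  have hta : t.a.1 ≤ v := by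
    by_contra hb
    push_neg at hb
    obtain ⟨x, h1, h2, hd, _, _⟩ := ht (t.a.1 - v) (by linarith)
    exact absurd (dom_mem.mp hd).1 (by linarith)
  have htb : v ≤ t.b.1 := by
    obtain ⟨x, h1, _, hd, _, _⟩ := ht 1 one_pos
    linarith [(dom_mem.mp hd).2]
  have hud : v ∈ t.dom := dom_mem.mpr ⟨hta, htb⟩
  have hle : t.val v ≤ s.val v := by
    rw [← henv]; exact le_upperEnv htS hud
  have hge : s.val v ≤ t.val v := by
    by_contra hgt
    push_neg at hgt
    obtain ⟨γ, hγ, hnear⟩ := val_lt_near hgt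
    obtain ⟨x, h1, h2, _, _, h5⟩ := ht γ hγ
    have := hnear x (by rw [abs_of_nonneg (by linarith)]; linarith)
    linarith
  have hequ : t.val v = s.val v := le_antisymm hle hge
  have hsub : ∀ x : ℝ, t.val x - s.val x = (slope t - slope s) * (x - v) := by
    intro x
    have a1 := val_affine t x v
    have a2 := val_affine s x v
    rw [a1, a2, hequ]; ring
  have hΔ : 0 < slope t - slope s := by
    obtain ⟨x, h1, h2, _, _, h5⟩ := ht 1 one_pos
    have e1 := hsub x
    nlinarith
  refine ⟨t, htS, hud, by rw [hequ]; exact henv.symm, fun x hx => ?_⟩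
  have e1 := hsub x
  nlinarith

end Rlemmas

section Tags

def KindRel (S : Finset Seg) (W : ℝ) (I : Set ℝ) (g : Seg) (k : ℤ) (kind : ℕ) : Prop :=
  match kind with
  | 0 => sInf I = g.a.1 ∧ k = ⌊g.a.1 / W⌋
  | 1 => sInf I = g.b.1 ∧ k = ⌊g.b.1 / W⌋
  | 2 => k = ⌊sInf I / W⌋ ∧ sInf I ∈ g.dom ∧ g.val (sInf I) = upperEnv S (sInf I) ∧
      ∃ s, IsWitness S s I ∧ ((k : ℝ) + 1) * W ≤ s.b.1 ∧
        ∀ x, sInf I < x → g.val x < s.val x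
  | 3 => sSup I = g.b.1 ∧ k = ⌊g.b.1 / W⌋
  | 4 => sSup I = g.a.1 ∧ k = ⌊g.a.1 / W⌋
  | 5 => k = ⌊sSup I / W⌋ ∧ sSup I ∈ g.dom ∧ g.val (sSup I) = upperEnv S (sSup I) ∧
      ∃ s, IsWitness S s I ∧ s.b.1 < ((k : ℝ) + 1) * W ∧
        ∀ x, x < sSup I → g.val x < s.val x
  | _ => False

open Classical in
noncomputable def Rel (S : Finset Seg) (W : ℝ) (I : Set ℝ)
    (τ : (Seg × ℤ) × ℕ × Bool × Bool) : Prop :=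
  τ.2.2.1 = decide (sInf I ∈ I) ∧ τ.2.2.2 = decide (sSup I ∈ I) ∧
    KindRel S W I τ.1.1 τ.1.2 τ.2.1

lemma floor_mul_le {W p : ℝ} (hW : 0 < W) : (⌊p / W⌋ : ℝ) * W ≤ p :=
  (le_div_iff₀ hW).mp (Int.floor_le _)

lemma lt_floor_succ_mul {W p : ℝ} (hW : 0 < W) : p < ((⌊p / W⌋ : ℝ) + 1) * W := by
  have h2 := (div_lt_iff₀ hW).mp (Int.lt_floor_add_one (p / W))
  push_cast at h2 ⊢
  linarith

lemma kind2_inj {S : Finset Seg} {W : ℝ} (hW : 0 < W) {I₁ I₂ : Set ℝ}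
    (hne₁ : I₁.Nonempty) {g : Seg} {k : ℤ} {s₁ : Seg}
    (hw₁ : IsWitness S s₁ I₁) (hB₁ : ((k : ℝ) + 1) * W ≤ s₁.b.1)
    (hsign₁ : ∀ x, sInf I₁ < x → g.val x < s₁.val x)
    (hval₂ : g.val (sInf I₂) = upperEnv S (sInf I₂)) (hk₂ : k = ⌊sInf I₂ / W⌋)
    (hlt : sInf I₁ < sInf I₂) : False := by
  have h1 : g.val (sInf I₂) < s₁.val (sInf I₂) := hsign₁ _ hlt
  have ha : s₁.a.1 ≤ sInf I₁ := winf_ge hw₁ hne₁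
  have hu2B : sInf I₂ < ((k : ℝ) + 1) * W := by
    rw [hk₂]; exact lt_floor_succ_mul hW
  have hdom : sInf I₂ ∈ s₁.dom := dom_mem.mpr ⟨by linarith, by linarith⟩
  have h2 := le_upperEnv hw₁.1 hdom
  rw [← hval₂] at h2
  linarith

lemma kind5_inj {S : Finset Seg} {W : ℝ} (hW : 0 < W)
    (hWle : ∀ t ∈ S, W ≤ t.width) {I₁ I₂ : Set ℝ}
    (hne₂ : I₂.Nonempty) {g : Seg} {k : ℤ} {s₂ : Seg}
    (hval₁ : g.val (sSup I₁) = upperEnv S (sSup I₁)) (hk₁ : k = ⌊sSup I₁ / W⌋)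
    (hw₂ : IsWitness S s₂ I₂) (hB₂ : s₂.b.1 < ((k : ℝ) + 1) * W)
    (hsign₂ : ∀ x, x < sSup I₂ → g.val x < s₂.val x)
    (hlt : sSup I₁ < sSup I₂) : False := by
  have h1 : g.val (sSup I₁) < s₂.val (sSup I₁) := hsign₂ _ hlt
  have hb2 : sSup I₂ ≤ s₂.b.1 := wsup_le hw₂ hne₂
  have hdom : sSup I₁ ∉ s₂.dom := by
    intro hd
    have h2 := le_upperEnv hw₂.1 hd
    rw [← hval₁] at h2
    linarith
  have ha2 : sSup I₁ < s₂.a.1 := by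
    by_contra hle
    push_neg at hle
    exact hdom (dom_mem.mpr ⟨hle, by linarith⟩)
  have hkW : (k : ℝ) * W ≤ sSup I₁ := by
    rw [hk₁]; exact floor_mul_le hW
  have hwid := hWle s₂ hw₂.1
  have : s₂.width = s₂.b.1 - s₂.a.1 := rfl
  nlinarith

lemma exists_tag {S : Finset Seg} {W : ℝ} (hW : 0 < W) {I : Set ℝ} (hI : MaxEnvPiece S I) :
    ∃ g k kind, g ∈ S ∧ ⌊g.a.1 / W⌋ ≤ k ∧ k ≤ ⌊g.b.1 / W⌋ ∧ kind < 6 ∧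
      KindRel S W I g k kind := by
  classical
  obtain ⟨s, hw⟩ := piece_witness hI
  have hne := piece_nonempty hI
  have hsS := hw.1
  have hau : s.a.1 ≤ sInf I := winf_ge hw hne
  have hvb : sSup I ≤ s.b.1 := wsup_le hw hne
  have huv : sInf I ≤ sSup I := winf_le_wsup hw hne
  have hub : sInf I ≤ s.b.1 := huv.trans hvb
  have hav : s.a.1 ≤ sSup I := hau.trans huv
  have hmono : ∀ {x y : ℝ}, x ≤ y → ⌊x / W⌋ ≤ ⌊y / W⌋ := by
    intro x y h
    exact Int.floor_mono (by gcongr)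
  by_cases h0 : sInf I = s.a.1
  · exact ⟨s, ⌊s.a.1 / W⌋, 0, hsS, le_refl _, hmono s.lt.le, by norm_num, h0, rfl⟩
  have hau' : s.a.1 < sInf I := lt_of_le_of_ne hau (Ne.symm h0)
  by_cases h1 : upperEnv S (sInf I) = s.val (sInf I)
  swap
  · obtain ⟨t, htS, htb⟩ := exists_kill_left hI hw h1
    exact ⟨t, ⌊t.b.1 / W⌋, 1, htS, hmono t.lt.le, le_refl _, by norm_num, htb.symm, rfl⟩
  by_cases h2 : ∃ ε, 0 < ε ∧ ∀ x, sInf I - ε < x → x < sInf I → upperEnv S x = s.val x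
  · obtain ⟨ε, hε, hflat⟩ := h2
    exact (not_flat_left hI hw hau' h1 hε hflat).elim
  push_neg at h2
  obtain ⟨r, hrS, hrd, hrv, hrsign⟩ := exists_left_r hsS hau' hub h1 h2
  by_cases h3 : ((⌊sInf I / W⌋ : ℝ) + 1) * W ≤ s.b.1
  · exact ⟨r, ⌊sInf I / W⌋, 2, hrS, hmono (dom_mem.mp hrd).1, hmono (dom_mem.mp hrd).2,
      by norm_num, rfl, hrd, hrv, s, hw, h3, hrsign⟩
  push_neg at h3
  by_cases h4 : sSup I = s.b.1
  · exact ⟨s, ⌊s.b.1 / W⌋, 3, hsS, hmono s.lt.le, le_refl _, by norm_num, h4, rfl⟩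
  have hvb' : sSup I < s.b.1 := lt_of_le_of_ne hvb h4
  by_cases h5 : upperEnv S (sSup I) = s.val (sSup I)
  swap
  · obtain ⟨t, htS, hta⟩ := exists_kill_right hI hw h5
    exact ⟨t, ⌊t.a.1 / W⌋, 4, htS, le_refl _, hmono t.lt.le, by norm_num, hta.symm, rfl⟩
  by_cases h6 : ∃ ε, 0 < ε ∧ ∀ x, sSup I < x → x < sSup I + ε → upperEnv S x = s.val x
  · obtain ⟨ε, hε, hflat⟩ := h6
    exact (not_flat_right hI hw hvb' h5 hε hflat).elim
  push_neg at h6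
  obtain ⟨r', hrS', hrd', hrv', hrsign'⟩ := exists_right_r hsS hav hvb' h5 h6
  have hfl : (⌊sInf I / W⌋ : ℝ) ≤ (⌊sSup I / W⌋ : ℝ) := by exact_mod_cast hmono huv
  have hbv : s.b.1 < ((⌊sSup I / W⌋ : ℝ) + 1) * W := by nlinarith
  exact ⟨r', ⌊sSup I / W⌋, 5, hrS', hmono (dom_mem.mp hrd').1, hmono (dom_mem.mp hrd').2,
    by norm_num, rfl, hrd', hrv', s, hw, hbv, hrsign'⟩

end Tags

section Counting

lemma ncard_le_of_rel {α β : Type*} {A : Set α} {B : Finset β} (R : α → β → Prop)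
    (hex : ∀ a ∈ A, ∃ b ∈ B, R a b)
    (hinj : ∀ a₁ a₂ b, a₁ ∈ A → a₂ ∈ A → R a₁ b → R a₂ b → a₁ = a₂) :
    A.Finite ∧ A.ncard ≤ B.card := by
  classical
  rcases A.eq_empty_or_nonempty with hA | ⟨a₀, ha₀⟩
  · subst hA; simp
  obtain ⟨b₀, hb₀, -⟩ := hex a₀ ha₀
  set f : α → β := fun a => if h : a ∈ A then (hex a h).choose else b₀ with hf
  have hfB : ∀ a ∈ A, f a ∈ (B : Set β) := by
    intro a ha
    simp only [hf, dif_pos ha]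
    exact (hex a ha).choose_spec.1
  have hfR : ∀ a (ha : a ∈ A), R a (f a) := by
    intro a ha
    simp only [hf, dif_pos ha]
    exact (hex a ha).choose_spec.2
  have hinjOn : Set.InjOn f A := fun a₁ h₁ a₂ h₂ heq =>
    hinj a₁ a₂ (f a₁) h₁ h₂ (hfR a₁ h₁) (heq ▸ hfR a₂ h₂)
  constructor
  · refine Set.Finite.of_finite_image ?_ hinjOn
    exact B.finite_toSet.subset (by rintro y ⟨a, ha, rfl⟩; exact hfB a ha)
  · have h := Set.ncard_le_ncard_of_injOn f hfB hinjOn B.finite_toSet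
    simpa [Set.ncard_coe_finset] using h

lemma icc_card_le {W d : ℝ} (hW : 0 < W) (hd : 1 ≤ d) {g : Seg} (hwidth : g.width ≤ d * W) :
    ((Finset.Icc ⌊g.a.1 / W⌋ ⌊g.b.1 / W⌋).card : ℝ) ≤ d + 2 := by
  rw [Int.card_Icc]
  set z : ℤ := ⌊g.b.1 / W⌋ + 1 - ⌊g.a.1 / W⌋ with hz
  have h1 : (⌊g.b.1 / W⌋ : ℝ) ≤ g.b.1 / W := Int.floor_le _
  have h2 : g.a.1 / W - 1 < (⌊g.a.1 / W⌋ : ℝ) := Int.sub_one_lt_floor _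
  have h3 : g.b.1 / W - g.a.1 / W ≤ d := by
    rw [div_sub_div_same, div_le_iff₀ hW]
    exact hwidth
  have h4 : (z : ℝ) ≤ d + 2 := by
    rw [hz]; push_cast; linarith
  rcases le_or_gt 0 z with hz0 | hz0
  · have : ((z.toNat : ℕ) : ℝ) = (z : ℝ) := by exact_mod_cast Int.toNat_of_nonneg hz0
    rw [this]; exact h4
  · have : z.toNat = 0 := Int.toNat_of_nonpos hz0.le
    rw [this]; push_cast; linarith

end Counting

end UEP


open UEP

/-- The complexity of the upper envelope of a set of segments whose widths pairwise
differ by at most a factor `d` is `O(d·n)`. -/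
theorem upper_envelope_bounded_width_ratio_complexity :
    ∃ C : ℝ, 0 < C ∧ ∀ d : ℝ, 1 ≤ d → ∀ S : Finset Seg,
      (∀ s ∈ S, ∀ t ∈ S, s.width ≤ d * t.width) →
      {I : Set ℝ | MaxEnvPiece S I}.Finite ∧
      ({I : Set ℝ | MaxEnvPiece S I}.ncard : ℝ) ≤ C * d * (S.card : ℝ) := by
  classical
  refine ⟨72, by norm_num, ?_⟩
  intro d hd S hratio
  rcases S.eq_empty_or_nonempty with rfl | hSne
  · have hempty : {I : Set ℝ | MaxEnvPiece (∅ : Finset Seg) I} = ∅ := by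
      ext I
      simp only [Set.mem_setOf_eq, Set.mem_empty_iff_false, iff_false]
      rintro ⟨⟨-, -, s, hs, -⟩, -⟩
      exact absurd hs (Finset.notMem_empty s)
    rw [hempty]
    refine ⟨Set.finite_empty, ?_⟩
    simp
  obtain ⟨t₀, ht₀, hmin⟩ := S.exists_min_image Seg.width hSne
  set W := t₀.width with hWdef
  have hW : 0 < W := width_pos t₀
  have hWle : ∀ t ∈ S, W ≤ t.width := hmin
  have hWd : ∀ r ∈ S, r.width ≤ d * W := fun r hr => hratio r hr t₀ ht₀
  set Tags : Finset (Seg × ℤ) :=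
    S.biUnion (fun g => (Finset.Icc ⌊g.a.1 / W⌋ ⌊g.b.1 / W⌋).image (fun k => (g, k)))
    with hTagsdef
  set K : Finset (ℕ × Bool × Bool) :=
    (Finset.range 6) ×ˢ (Finset.univ : Finset (Bool × Bool)) with hKdef
  set Target : Finset ((Seg × ℤ) × ℕ × Bool × Bool) := Tags ×ˢ K with hTargetdef
  have hex : ∀ I ∈ {I : Set ℝ | MaxEnvPiece S I}, ∃ τ ∈ Target, Rel S W I τ := by
    intro I hI
    obtain ⟨g, k, kind, hgS, hk1, hk2, hkind, hkr⟩ := exists_tag hW hI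
    refine ⟨((g, k), (kind, (decide (sInf I ∈ I), decide (sSup I ∈ I)))), ?_, rfl, rfl, hkr⟩
    rw [hTargetdef, Finset.mem_product]
    constructor
    · rw [hTagsdef, Finset.mem_biUnion]
      exact ⟨g, hgS, Finset.mem_image.mpr ⟨k, Finset.mem_Icc.mpr ⟨hk1, hk2⟩, rfl⟩⟩
    · rw [hKdef, Finset.mem_product]
      exact ⟨Finset.mem_range.mpr hkind, Finset.mem_univ _⟩
  have hinj : ∀ I₁ I₂ τ, I₁ ∈ {I : Set ℝ | MaxEnvPiece S I} → I₂ ∈ {I : Set ℝ | MaxEnvPiece S I} →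
      Rel S W I₁ τ → Rel S W I₂ τ → I₁ = I₂ := by
    intro I₁ I₂ τ hI₁ hI₂ hR₁ hR₂
    have hM₁ : MaxEnvPiece S I₁ := hI₁
    have hM₂ : MaxEnvPiece S I₂ := hI₂
    obtain ⟨⟨g, k⟩, kind, b1, b2⟩ := τ
    obtain ⟨hb1₁, hb2₁, hk₁⟩ := hR₁
    obtain ⟨hb1₂, hb2₂, hk₂⟩ := hR₂
    have hbi : (sInf I₁ ∈ I₁ ↔ sInf I₂ ∈ I₂) := decide_eq_decide.mp (hb1₁.symm.trans hb1₂)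
    have hbs : (sSup I₁ ∈ I₁ ↔ sSup I₂ ∈ I₂) := decide_eq_decide.mp (hb2₁.symm.trans hb2₂)
    rcases kind with _ | _ | _ | _ | _ | _ | kind
    · simp only [KindRel] at hk₁ hk₂
      exact eq_of_inf_eq hM₁ hM₂ (hk₁.1.trans hk₂.1.symm) hbi hbs
    · simp only [KindRel] at hk₁ hk₂
      exact eq_of_inf_eq hM₁ hM₂ (hk₁.1.trans hk₂.1.symm) hbi hbs
    · simp only [KindRel] at hk₁ hk₂
      obtain ⟨hkk₁, hd₁, hv₁, s₁, hw₁, hB₁, hs₁⟩ := hk₁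
      obtain ⟨hkk₂, hd₂, hv₂, s₂, hw₂, hB₂, hs₂⟩ := hk₂
      rcases lt_trichotomy (sInf I₁) (sInf I₂) with h | h | h
      · exact (kind2_inj hW (piece_nonempty hM₁) hw₁ hB₁ hs₁ hv₂ hkk₂ h).elim
      · exact eq_of_inf_eq hM₁ hM₂ h hbi hbs
      · exact (kind2_inj hW (piece_nonempty hM₂) hw₂ hB₂ hs₂ hv₁ hkk₁ h).elim
    · simp only [KindRel] at hk₁ hk₂
      exact eq_of_sup_eq hM₁ hM₂ (hk₁.1.trans hk₂.1.symm) hbi hbs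
    · simp only [KindRel] at hk₁ hk₂
      exact eq_of_sup_eq hM₁ hM₂ (hk₁.1.trans hk₂.1.symm) hbi hbs
    · simp only [KindRel] at hk₁ hk₂
      obtain ⟨hkk₁, hd₁, hv₁, s₁, hw₁, hB₁, hs₁⟩ := hk₁
      obtain ⟨hkk₂, hd₂, hv₂, s₂, hw₂, hB₂, hs₂⟩ := hk₂
      rcases lt_trichotomy (sSup I₁) (sSup I₂) with h | h | h
      · exact (kind5_inj hW hWle (piece_nonempty hM₂) hv₁ hkk₁ hw₂ hB₂ hs₂ h).elim
      · exact eq_of_sup_eq hM₁ hM₂ h hbi hbs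
      · exact (kind5_inj hW hWle (piece_nonempty hM₁) hv₂ hkk₂ hw₁ hB₁ hs₁ h).elim
    · simp only [KindRel] at hk₁
  obtain ⟨hfin, hcard⟩ := ncard_le_of_rel (Rel S W) hex hinj
  refine ⟨hfin, ?_⟩
  have hK24 : K.card = 24 := by
    rw [hKdef, Finset.card_product]
    simp
  have hTc : Target.card = Tags.card * 24 := by
    rw [hTargetdef, Finset.card_product, hK24]
  have h1 : Tags.card ≤ ∑ g ∈ S, (Finset.Icc ⌊g.a.1 / W⌋ ⌊g.b.1 / W⌋).card := by
    rw [hTagsdef]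
    refine Finset.card_biUnion_le.trans (Finset.sum_le_sum ?_)
    exact fun g _ => Finset.card_image_le
  have hTagsR : (Tags.card : ℝ) ≤ (S.card : ℝ) * (d + 2) := by
    calc (Tags.card : ℝ)
        ≤ ((∑ g ∈ S, (Finset.Icc ⌊g.a.1 / W⌋ ⌊g.b.1 / W⌋).card : ℕ) : ℝ) := by
          exact_mod_cast h1
      _ = ∑ g ∈ S, ((Finset.Icc ⌊g.a.1 / W⌋ ⌊g.b.1 / W⌋).card : ℝ) := by push_cast; ring
      _ ≤ ∑ _g ∈ S, (d + 2) := Finset.sum_le_sum (fun g hg => icc_card_le hW hd (hWd g hg))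
      _ = (S.card : ℝ) * (d + 2) := by rw [Finset.sum_const, nsmul_eq_mul]
  have hn0 : (0 : ℝ) ≤ (S.card : ℝ) := Nat.cast_nonneg _
  calc ({I : Set ℝ | MaxEnvPiece S I}.ncard : ℝ)
      ≤ (Target.card : ℝ) := by exact_mod_cast hcard
    _ = (Tags.card : ℝ) * 24 := by rw [hTc]; push_cast; ring
    _ ≤ ((S.card : ℝ) * (d + 2)) * 24 := by nlinarith
    _ ≤ 72 * d * (S.card : ℝ) := by nlinarith
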